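/- Let R be a ring. Then the power series ring R[[x]] is a left Archimedean domain if and only if R is a left Archimedean domain. -/

import Mathlib

/-- A ring `R` is *left Archimedean* if for every nonunit `a ∈ R`,
`⋂ n, aⁿ·R = {0}`. -/
def LeftArchimedean (R : Type*) [Ring R] : Prop :=
  ∀ a : R, ¬ IsUnit a → (⋂ n : ℕ, {x : R | ∃ r : R, x = a ^ n * r}) = {0}

open PowerSeries in
private lemma aux_low_coeff_zero {R : Type*} [Ring R] [NoZeroDivisors R]
    (φ ψ : PowerSeries R) (ha : constantCoeff φ ≠ 0) (d : ℕ)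
    (hlow : ∀ k, k < d → coeff k (φ * ψ) = 0) :
    ∀ k, k < d → coeff k ψ = 0 := by
  intro k
  induction k using Nat.strong_induction_on with
  | _ k ih =>
    intro hk
    have h := hlow k hk
    rw [coeff_mul, Finset.sum_eq_single (0, k)] at h
    · simp only [coeff_zero_eq_constantCoeff_apply] at h
      rcases mul_eq_zero.mp h with h0 | h0
      · exact absurd h0 ha
      · exact h0
    · rintro ⟨i, j⟩ hij hne
      rw [Finset.HasAntidiagonal.mem_antidiagonal] at hij
      have hi : i ≠ 0 := by
        rintro rfl
        simp at hij
        exact hne (by simp [hij])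
      have hj : j < k := by omega
      rw [ih j hj (hj.trans hk), mul_zero]
    · intro hmem
      exact absurd (by simp [Finset.mem_antidiagonal]) hmem

open PowerSeries in
private lemma aux_coeff_mul_of_low {R : Type*} [Ring R]
    (φ ψ : PowerSeries R) (d : ℕ)
    (hlow : ∀ k, k < d → coeff k ψ = 0) :
    coeff d (φ * ψ) = constantCoeff φ * coeff d ψ := by
  rw [coeff_mul, Finset.sum_eq_single (0, d)]
  · simp [coeff_zero_eq_constantCoeff_apply]
  · rintro ⟨i, j⟩ hij hne
    rw [Finset.HasAntidiagonal.mem_antidiagonal] at hij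
    have hi : i ≠ 0 := by
      rintro rfl
      simp at hij
      exact hne (by simp [hij])
    rw [hlow j (by omega), mul_zero]
  · intro hmem
    exact absurd (by simp [Finset.mem_antidiagonal]) hmem

open PowerSeries in
private lemma aux_coeff_pow_mul_zero {R : Type*} [Ring R]
    (f : PowerSeries R) (hf : constantCoeff f = 0) :
    ∀ n g k, k < n → coeff k (f ^ n * g) = 0 := by
  intro n
  induction n with
  | zero => intro g k hk; omega
  | succ n ih =>
    intro g k hk
    rw [pow_succ', mul_assoc, coeff_mul]
    apply Finset.sum_eq_zero
    rintro ⟨i, j⟩ hij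
    rw [Finset.HasAntidiagonal.mem_antidiagonal] at hij
    rcases Nat.eq_zero_or_pos i with rfl | h0
    · have h00 : coeff 0 f = 0 := by
        rw [coeff_zero_eq_constantCoeff_apply, hf]
      rw [h00, zero_mul]
    · rw [ih g j (by omega), mul_zero]

/-- The power series ring `R[[x]]` is a left Archimedean domain if and only if
`R` is a left Archimedean domain. -/
theorem powerSeries_leftArchimedean_domain_iff (R : Type*) [Ring R] :
    (IsDomain (PowerSeries R) ∧ LeftArchimedean (PowerSeries R)) ↔
      (IsDomain R ∧ LeftArchimedean R) := by
  constructor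
  · rintro ⟨hD, hA⟩
    have hCinj : Function.Injective (PowerSeries.C (R := R)) := PowerSeries.C_injective
    have hnt : Nontrivial R := by
      refine ⟨0, 1, fun h => ?_⟩
      have : (0 : PowerSeries R) = 1 := by
        rw [← map_zero (PowerSeries.C (R := R)), h, map_one]
      exact zero_ne_one this
    have hnzd : NoZeroDivisors R := by
      constructor
      intro a b hab
      have : (PowerSeries.C a) * (PowerSeries.C b) = 0 := by
        rw [← map_mul, hab, map_zero]
      rcases mul_eq_zero.mp this with h | h
      · exact Or.inl (hCinj (by simpa using h))
      · exact Or.inr (hCinj (by simpa using h))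
    refine ⟨NoZeroDivisors.to_isDomain R, ?_⟩
    intro a ha
    have haC : ¬ IsUnit (PowerSeries.C a) := by
      intro h
      exact ha (by simpa using PowerSeries.isUnit_iff_constantCoeff.mp h)
    have key := hA (PowerSeries.C a) haC
    ext x
    simp only [Set.mem_iInter, Set.mem_setOf_eq, Set.mem_singleton_iff]
    constructor
    · intro hx
      have : (PowerSeries.C x : PowerSeries R) ∈
          ⋂ n : ℕ, {y : PowerSeries R | ∃ r, y = (PowerSeries.C a) ^ n * r} := by
        simp only [Set.mem_iInter, Set.mem_setOf_eq]
        intro n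
        obtain ⟨r, hr⟩ := hx n
        exact ⟨PowerSeries.C r, by rw [hr, map_mul, map_pow]⟩
      rw [key] at this
      exact hCinj (by simpa using this)
    · rintro rfl n
      exact ⟨0, by rw [mul_zero]⟩
  · rintro ⟨hD, hA⟩
    refine ⟨inferInstance, ?_⟩
    intro f hf
    have ha : ¬ IsUnit (PowerSeries.constantCoeff f) := by
      intro h
      exact hf (PowerSeries.isUnit_iff_constantCoeff.mpr h)
    ext h
    simp only [Set.mem_iInter, Set.mem_setOf_eq, Set.mem_singleton_iff]
    constructor
    · intro hx
      by_cases h0 : PowerSeries.constantCoeff f = 0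
      · -- f has zero constant term: coefficients of h vanish below every n
        ext k
        obtain ⟨g, hg⟩ := hx (k + 1)
        rw [hg, aux_coeff_pow_mul_zero f h0 (k + 1) g k (by omega), map_zero]
      · classical
        by_contra hne
        -- let d be least index of a nonzero coefficient of h
        have hex : ∃ m, PowerSeries.coeff m h ≠ 0 := by
          by_contra hc
          push_neg at hc
          exact hne (PowerSeries.ext fun m => by rw [hc m, map_zero])
        set d := Nat.find hex with hd
        have hd1 : PowerSeries.coeff d h ≠ 0 := Nat.find_spec hex
        have hd2 : ∀ k, k < d → PowerSeries.coeff k h = 0 := by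
          intro k hk
          by_contra hc
          exact Nat.find_min hex hk hc
        set a := PowerSeries.constantCoeff f with haa
        have hmem : PowerSeries.coeff d h ∈
            ⋂ n : ℕ, {x : R | ∃ r : R, x = a ^ n * r} := by
          simp only [Set.mem_iInter, Set.mem_setOf_eq]
          intro n
          obtain ⟨g, hg⟩ := hx n
          have hfn : PowerSeries.constantCoeff (f ^ n) ≠ 0 := by
            rw [map_pow]
            exact pow_ne_zero n h0
          have hlow : ∀ k, k < d → PowerSeries.coeff k (f ^ n * g) = 0 := by
            intro k hk
            rw [← hg]; exact hd2 k hk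
          have hglow := aux_low_coeff_zero (f ^ n) g hfn d hlow
          refine ⟨PowerSeries.coeff d g, ?_⟩
          rw [hg, aux_coeff_mul_of_low (f ^ n) g d hglow, map_pow]
        rw [hA a ha] at hmem
        exact hd1 hmem
    · rintro rfl n
      exact ⟨0, by rw [mul_zero]⟩
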